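/- The sequence M^{(m)}_d defined by M^{(0)}_d = 1, M^{(m)}_1 = 1, and the recurrence M^{(m)}_d = Σ_{k=0}^m (d-1)/d^k · (m!/(m-k)!) · ((m+d-k-2)!/(m+d-1)!) · M^{(m-k)}_{d-1} satisfies the two-term recurrence M^{(m)}_d = ((d-1)/(m+d-1)) M^{(m)}_{d-1} + (m/(d(m+d-1))) M^{(m-1)}_d for all m ≥ 1, d ≥ 2. -/

import Mathlib

/-- The moments `M^{(m)}_d` defined by `M^{(0)}_d = 1`, `M^{(m)}_1 = 1` and the multi-term
recurrence (eq. (2) of the paper) satisfy the two-term recurrence (eq. (3)). -/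
theorem two_term_of_multi_term (M : ℕ → ℕ → ℚ)
    (h0 : ∀ d, 1 ≤ d → M 0 d = 1)
    (h1 : ∀ m, M m 1 = 1)
    (hrec : ∀ m d, 1 ≤ m → 2 ≤ d →
      M m d = ∑ k ∈ Finset.range (m + 1),
        ((d - 1 : ℚ) / (d : ℚ) ^ k) * ((m.factorial : ℚ) / ((m - k).factorial : ℚ)) *
          (((m + d - k - 2).factorial : ℚ) / ((m + d - 1).factorial : ℚ)) * M (m - k) (d - 1))
    (m d : ℕ) (hm : 1 ≤ m) (hd : 2 ≤ d) :
    M m d = ((d - 1 : ℚ) / (m + d - 1 : ℚ)) * M m (d - 1) +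
      ((m : ℚ) / ((d : ℚ) * (m + d - 1 : ℚ))) * M (m - 1) d := by
  have hmQ : (1:ℚ) ≤ (m:ℚ) := by exact_mod_cast hm
  have hdQ2 : (2:ℚ) ≤ (d:ℚ) := by exact_mod_cast hd
  have hdQ : (d:ℚ) ≠ 0 := by linarith
  have hNQ : ((m:ℚ) + (d:ℚ) - 1) ≠ 0 := by linarith
  -- auxiliary: M (m-1) d equals its multi-term expansion
  have haux : M (m-1) d = ∑ k ∈ Finset.range ((m-1) + 1),
      ((d - 1 : ℚ) / (d : ℚ) ^ k) * (((m-1).factorial : ℚ) / (((m-1) - k).factorial : ℚ)) *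
        ((((m-1) + d - k - 2).factorial : ℚ) / (((m-1) + d - 1).factorial : ℚ)) *
        M ((m-1) - k) (d - 1) := by
    rcases Nat.lt_or_ge 1 m with h | h
    · exact hrec (m-1) d (by omega) hd
    · have hm1 : m = 1 := le_antisymm h hm
      subst hm1
      simp only [Nat.sub_self, zero_add, Finset.sum_range_one, Nat.sub_zero, pow_zero,
        Nat.factorial_zero]
      rw [h0 d (by omega), h0 (d-1) (by omega)]
      rw [show (d - 1 : ℕ) = (d - 2) + 1 from by omega, Nat.factorial_succ]
      have hfne : (((d-2).factorial : ℚ)) ≠ 0 := by exact_mod_cast (Nat.factorial_pos _).ne'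
      have hne1 : (d:ℚ) - 1 ≠ 0 := by linarith
      push_cast [show 2 ≤ d from hd]
      rw [show (d:ℚ) - 2 + 1 = (d:ℚ) - 1 from by ring]
      field_simp
  have hm1 : m - 1 + 1 = m := by omega
  rw [hrec m d hm hd, Finset.sum_range_succ']
  rw [hm1] at haux
  -- the k=0 term
  have hfac0 : ((m + d - 1).factorial : ℚ) = ((m:ℚ) + d - 1) * ((m + d - 2).factorial : ℚ) := by
    rw [show (m + d - 2 : ℕ) = (m + d - 1) - 1 from by omega,
      ← Nat.mul_factorial_pred (show 0 < m + d - 1 from by omega).ne']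
    push_cast [show 1 ≤ m + d from by omega]
    ring
  have h0term : ((d - 1 : ℚ) / (d : ℚ) ^ 0) * ((m.factorial : ℚ) / ((m - 0).factorial : ℚ)) *
      (((m + d - 0 - 2).factorial : ℚ) / ((m + d - 1).factorial : ℚ)) * M (m - 0) (d - 1)
      = ((d - 1 : ℚ) / ((m:ℚ) + d - 1)) * M m (d - 1) := by
    have hfne : ((m + d - 2).factorial : ℚ) ≠ 0 := by exact_mod_cast (Nat.factorial_pos _).ne'
    have hfne2 : ((m).factorial : ℚ) ≠ 0 := by exact_mod_cast (Nat.factorial_pos _).ne'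
    simp only [Nat.sub_zero, pow_zero]
    rw [show (m + d - 2 : ℕ) = m + d - 0 - 2 from by omega] at hfac0 hfne
    rw [hfac0]
    field_simp
    simp only [Nat.sub_zero]
  -- the shifted sum
  have hsum : ∑ k ∈ Finset.range m,
      ((d - 1 : ℚ) / (d : ℚ) ^ (k+1)) * ((m.factorial : ℚ) / ((m - (k+1)).factorial : ℚ)) *
        (((m + d - (k+1) - 2).factorial : ℚ) / ((m + d - 1).factorial : ℚ)) * M (m - (k+1)) (d - 1)
      = ((m : ℚ) / ((d : ℚ) * ((m:ℚ) + d - 1))) * M (m-1) d := by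
    rw [haux, Finset.mul_sum]
    refine Finset.sum_congr rfl ?_
    intro k hk
    have hkm : k < m := Finset.mem_range.mp hk
    have e1 : m - (k+1) = (m-1) - k := by omega
    have e2 : m + d - (k+1) - 2 = (m-1) + d - k - 2 := by omega
    have e3 : (m.factorial : ℚ) = (m:ℚ) * ((m-1).factorial : ℚ) := by
      rw [← Nat.mul_factorial_pred (show 0 < m from hm).ne']
      push_cast
      ring
    have e4 : ((m + d - 1).factorial : ℚ) = ((m:ℚ) + d - 1) * (((m-1) + d - 1).factorial : ℚ) := by
      rw [show (m - 1 + d - 1 : ℕ) = (m + d - 1) - 1 from by omega,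
        ← Nat.mul_factorial_pred (show 0 < m + d - 1 from by omega).ne']
      push_cast [show 1 ≤ m + d from by omega]
      ring
    have hf1 : (((m-1) - k).factorial : ℚ) ≠ 0 := by exact_mod_cast (Nat.factorial_pos _).ne'
    have hf2 : (((m-1) + d - 1).factorial : ℚ) ≠ 0 := by exact_mod_cast (Nat.factorial_pos _).ne'
    have hdk : (d:ℚ)^k ≠ 0 := pow_ne_zero _ hdQ
    rw [e1, e2, e3, e4, pow_succ]
    field_simp
  rw [hsum, h0term]
  ring
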